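/- For every integer k ≥ 1, the set of Knott representations of L_k is finite and κ(L_k) = k if k is odd, while κ(L_k) = k + 1 if k is even. -/

import Mathlib

/-- The golden ratio φ = (1+√5)/2. -/
noncomputable def phi : ℝ := (1 + Real.sqrt 5) / 2

/-- `a` is a finite φ-representation of the real number `x`: a finitely supported
function `a : ℤ → {0,1}` with `x = Σ_{i ∈ ℤ} a(i) · φ^i`. -/
def IsPhiRep (x : ℝ) (a : ℤ →₀ ℕ) : Prop :=
  (∀ i, a i ≤ 1) ∧ x = ∑ i ∈ a.support, (a i : ℝ) * phi ^ i

/-- `a` is the canonical φ-representation of `x`: a finite φ-representation with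
no two adjacent digits equal to 1. -/
def IsCanonRep (x : ℝ) (a : ℤ →₀ ℕ) : Prop :=
  IsPhiRep x a ∧ ∀ i : ℤ, a i * a (i + 1) = 0

/-- `a` is a Knott representation of `n`: a finite φ-representation of `n` such that,
writing `j` for the minimal index with `a j = 1`, it is not the case that both
`a (j+1) = 1` and `a (j+2) = 0` (the digit string does not end in 011). -/
def IsKnottRep (n : ℕ) (a : ℤ →₀ ℕ) : Prop :=
  IsPhiRep n a ∧
    ∀ j : ℤ, (a j ≠ 0 ∧ ∀ i : ℤ, a i ≠ 0 → j ≤ i) → ¬(a (j + 1) = 1 ∧ a (j + 2) = 0)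

/-- The set of Knott representations of `n`. -/
def knottSet (n : ℕ) : Set (ℤ →₀ ℕ) := {a | IsKnottRep n a}

/-- Lucas numbers: L₀ = 2, L₁ = 1, L_{n+2} = L_{n+1} + L_n. -/
def lucas : ℕ → ℕ
  | 0 => 2
  | 1 => 1
  | n + 2 => lucas (n + 1) + lucas n

-- ==================== basic facts about φ and ψ ====================

lemma phi_eq : phi = Real.goldenRatio := rfl
lemma one_lt_phi : 1 < phi := Real.one_lt_goldenRatio
lemma phi_pos : 0 < phi := Real.goldenRatio_pos
lemma phi_ne : (phi:ℝ) ≠ 0 := Real.goldenRatio_ne_zero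
lemma phi_sq : phi^2 = phi + 1 := Real.goldenRatio_sq
lemma phi_lt_two : phi < 2 := Real.goldenRatio_lt_two
lemma irrational_phi : Irrational phi := Real.goldenRatio_irrational

noncomputable def psi : ℝ := Real.goldenConj
lemma psi_sq : psi^2 = psi + 1 := Real.goldenConj_sq
lemma psi_neg : psi < 0 := Real.goldenConj_neg
lemma psi_ne : psi ≠ 0 := Real.goldenConj_ne_zero
lemma psi_eq : psi = -phi⁻¹ := by
  show Real.goldenConj = -Real.goldenRatio⁻¹
  rw [Real.inv_goldenRatio]; simp

lemma zp_pos (i : ℤ) : 0 < phi ^ i := zpow_pos phi_pos i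
lemma zp_add (i j : ℤ) : phi ^ (i + j) = phi ^ i * phi ^ j := zpow_add₀ phi_ne i j
lemma zp_fib (i : ℤ) : phi ^ (i + 2) = phi ^ (i + 1) + phi ^ i := by
  have h1 : phi ^ (i+2) = phi ^ i * phi ^ (2:ℤ) := by rw [← zp_add]
  have h2 : phi ^ (i+1) = phi ^ i * phi := by rw [zp_add]; norm_num
  have : phi ^ (2:ℤ) = phi + 1 := by rw [show (2:ℤ) = (2:ℕ) by rfl, zpow_natCast]; exact phi_sq
  rw [h1, h2, this]; ring
lemma zp_lt {a b : ℤ} (h : a < b) : phi ^ a < phi ^ b := zpow_lt_zpow_right₀ one_lt_phi h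
lemma zp_le {a b : ℤ} (h : a ≤ b) : phi ^ a ≤ phi ^ b := zpow_le_zpow_right₀ (le_of_lt one_lt_phi) h
lemma zp_inj {a b : ℤ} (h : phi ^ a = phi ^ b) : a = b := by
  by_contra hne
  rcases lt_or_gt_of_ne hne with h1 | h1
  · exact absurd h (ne_of_lt (zp_lt h1))
  · exact absurd h.symm (ne_of_lt (zp_lt h1))

noncomputable def V (S : Finset ℤ) : ℝ := ∑ i ∈ S, phi ^ i

lemma V_nonneg (S : Finset ℤ) : 0 ≤ V S := Finset.sum_nonneg fun i _ => (zp_pos i).le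
lemma V_pos {S : Finset ℤ} (h : S.Nonempty) : 0 < V S :=
  Finset.sum_pos (fun i _ => zp_pos i) h
lemma V_eq_zero {S : Finset ℤ} (h : V S = 0) : S = ∅ := by
  by_contra hne
  exact absurd h (ne_of_gt (V_pos (Finset.nonempty_iff_ne_empty.mpr hne)))
lemma V_insert {S : Finset ℤ} {i : ℤ} (h : i ∉ S) : V (insert i S) = phi ^ i + V S :=
  Finset.sum_insert h
lemma V_erase {S : Finset ℤ} {i : ℤ} (h : i ∈ S) : V (S.erase i) = V S - phi ^ i := by
  have := Finset.add_sum_erase S (fun j => phi ^ j) h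
  unfold V; linarith [this]
lemma mem_le_V {S : Finset ℤ} {i : ℤ} (h : i ∈ S) : phi ^ i ≤ V S :=
  Finset.single_le_sum (fun j _ => (zp_pos j).le) h
lemma V_union {S T : Finset ℤ} (h : Disjoint S T) : V (S ∪ T) = V S + V T :=
  Finset.sum_union h

lemma V_Icc : ∀ (n : ℕ) (a b : ℤ), b = a - 1 + n → V (Finset.Icc a b) = phi ^ (b+2) - phi ^ (a+1) := by
  intro n
  induction n with
  | zero =>
    intro a b hb
    have : b = a - 1 := by omega
    subst this
    have : Finset.Icc a (a-1) = ∅ := by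
      apply Finset.Icc_eq_empty; omega
    rw [this]
    show (0:ℝ) = _
    have : a - 1 + 2 = a + 1 := by ring
    rw [this]; ring
  | succ n ih =>
    intro a b hb
    have hab : a ≤ b := by omega
    have : Finset.Icc a b = insert b (Finset.Icc a (b-1)) := by
      ext x; simp [Finset.mem_Icc, Finset.mem_insert]; omega
    rw [this, V_insert (by simp [Finset.mem_Icc]), ih a (b-1) (by omega)]
    have h1 : b - 1 + 2 = b + 1 := by ring
    rw [h1]
    have := zp_fib b
    linarith [this]

def topSet (t : ℤ) (m : ℕ) : Finset ℤ := (Finset.range m).image (fun r : ℕ => t - 1 - 2*(r:ℤ))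

lemma mem_topSet {t x : ℤ} {m : ℕ} : x ∈ topSet t m ↔ ∃ r : ℕ, r < m ∧ x = t - 1 - 2*(r:ℤ) := by
  unfold topSet
  simp [Finset.mem_image, Finset.mem_range]
  constructor
  · rintro ⟨r, hr, rfl⟩; exact ⟨r, hr, rfl⟩
  · rintro ⟨r, hr, rfl⟩; exact ⟨r, hr, rfl⟩

lemma topSet_zero (t : ℤ) : topSet t 0 = ∅ := by simp [topSet]

lemma topSet_succ (t : ℤ) (m : ℕ) :
    topSet t (m+1) = insert (t - 1 - 2*(m:ℤ)) (topSet t m) := by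
  ext x
  simp only [mem_topSet, Finset.mem_insert]
  constructor
  · rintro ⟨r, hr, rfl⟩
    rcases Nat.lt_succ_iff_lt_or_eq.mp hr with h | rfl
    · exact Or.inr ⟨r, h, rfl⟩
    · exact Or.inl rfl
  · rintro (rfl | ⟨r, hr, rfl⟩)
    · exact ⟨m, Nat.lt_succ_self m, rfl⟩
    · exact ⟨r, Nat.lt_succ_of_lt hr, rfl⟩

lemma topSet_cons (t : ℤ) (m : ℕ) :
    topSet t (m+1) = insert (t-1) (topSet (t-2) m) := by
  ext x
  simp only [mem_topSet, Finset.mem_insert]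
  constructor
  · rintro ⟨r, hr, rfl⟩
    rcases Nat.eq_zero_or_pos r with rfl | hp
    · left; simp
    · right; refine ⟨r - 1, by omega, ?_⟩
      have : ((r-1 : ℕ) : ℤ) = (r:ℤ) - 1 := by omega
      rw [this]; ring
  · rintro (rfl | ⟨r, hr, rfl⟩)
    · exact ⟨0, Nat.succ_pos m, by ring⟩
    · exact ⟨r + 1, by omega, by push_cast; ring⟩

lemma topSet_mem_le {t x : ℤ} {m : ℕ} (h : x ∈ topSet t m) : x ≤ t - 1 := by
  rw [mem_topSet] at h; obtain ⟨r, _, rfl⟩ := h; omega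

lemma topSet_mem_ge {t x : ℤ} {m : ℕ} (h : x ∈ topSet t m) : t + 1 - 2*(m:ℤ) ≤ x := by
  rw [mem_topSet] at h; obtain ⟨r, hr, rfl⟩ := h; omega

lemma V_topSet (t : ℤ) : ∀ m : ℕ, V (topSet t m) = phi ^ t - phi ^ (t - 2*(m:ℤ)) := by
  intro m
  induction m with
  | zero => simp [topSet_zero]; show (0:ℝ) = _; ring
  | succ m ih =>
    rw [topSet_succ, V_insert (by intro h; exact absurd (topSet_mem_ge h) (by push_cast; omega)), ih]
    have h2 := zp_fib (t - 2*((m:ℤ)+1))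
    have e1 : t - 2*((m:ℤ)+1) + 2 = t - 2*(m:ℤ) := by ring
    have e2 : t - 2*((m:ℤ)+1) + 1 = t - 1 - 2*(m:ℤ) := by ring
    rw [e1, e2] at h2
    push_cast
    have e3 : t - 2*((m:ℤ)+1) = t - 2*(m:ℤ) - 2 := by ring
    rw [e3] at h2 ⊢
    linarith

-- L1: the fundamental upper bound with equality characterization
lemma V_bound : ∀ (S : Finset ℤ), S.Nonempty → ∀ (m : ℤ) (j : ℤ), j ∈ S → (∀ i ∈ S, j ≤ i) →
    (∀ i ∈ S, i ≤ m) →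
    V S ≤ phi ^ (m+2) - phi ^ (j+1) ∧
      (V S = phi ^ (m+2) - phi ^ (j+1) → S = Finset.Icc j m) := by
  intro S
  induction S using Finset.strongInduction with
  | _ S IH =>
  intro hne m j hjS hjmin hmax
  have hMne := hne
  set M := S.max' hne with hM
  have hMS : M ∈ S := S.max'_mem hne
  have hMm : M ≤ m := hmax M hMS
  have hjM : j ≤ M := hjmin M hMS
  set S' := S.erase M with hS'
  have hsub : S' ⊂ S := Finset.erase_ssubset hMS
  by_cases hS'e : S' = ∅
  · -- S = {M}, and j = M
    have hSM : S = {M} := by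
      ext x
      constructor
      · intro hx
        by_cases hxM : x = M
        · simp [hxM]
        · exfalso; have : x ∈ S' := Finset.mem_erase.mpr ⟨hxM, hx⟩
          rw [hS'e] at this; exact absurd this (Finset.notMem_empty x)
      · intro hx; rw [Finset.mem_singleton] at hx; subst hx; exact hMS
    have hjM' : j = M := by
      have : j ∈ ({M} : Finset ℤ) := hSM ▸ hjS
      simpa using this
    have hSM2 : S = {j} := by rw [hSM, hjM']
    have hMm2 : j ≤ m := by omega
    have hV : V S = phi ^ j := by rw [hSM2]; simp [V]
    constructor
    · rw [hV]
      have h1 : phi ^ j + phi ^ (j+1) = phi ^ (j+2) := by linarith [zp_fib j]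
      have h2 : phi ^ (j+2) ≤ phi ^ (m+2) := zp_le (by omega)
      linarith
    · intro heq
      rw [hV] at heq
      have h1 : phi ^ j + phi ^ (j+1) = phi ^ (j+2) := by linarith [zp_fib j]
      have : phi ^ (j+2) = phi ^ (m+2) := by linarith
      have hjm : j = m := by have := zp_inj this; omega
      rw [hSM2, hjm]
      ext x; rw [Finset.mem_singleton, Finset.mem_Icc]; omega
  · have hS'ne : S'.Nonempty := Finset.nonempty_iff_ne_empty.mpr hS'e
    have hjS' : j ∈ S' := by
      apply Finset.mem_erase.mpr
      refine ⟨?_, hjS⟩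
      intro hjm
      subst hjm
      -- then S = {j}: every element ≥ j and ≤ M = j
      obtain ⟨x, hx⟩ := hS'ne
      obtain ⟨hx1, hx2⟩ := Finset.mem_erase.mp hx
      have := hjmin x hx2
      have : x ≤ M := S.le_max' x hx2
      omega
    have hjM2 : j < M := by
      by_contra h
      have : j = M := le_antisymm hjM (not_lt.mp h)
      exact absurd this (Finset.mem_erase.mp hjS').1
    have hmax' : ∀ i ∈ S', i ≤ M - 1 := by
      intro i hi
      obtain ⟨h1, h2⟩ := Finset.mem_erase.mp hi
      have : i ≤ M := S.le_max' i h2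
      omega
    have hmin' : ∀ i ∈ S', j ≤ i := fun i hi => hjmin i (Finset.mem_erase.mp hi).2
    obtain ⟨ih1, ih2⟩ := IH S' hsub hS'ne (M-1) j hjS' hmin' hmax'
    have hVS : V S = phi ^ M + V S' := by
      have := V_erase hMS; rw [← hS'] at this; linarith
    have e1 : M - 1 + 2 = M + 1 := by ring
    rw [e1] at ih1 ih2
    have hfib : phi ^ M + phi ^ (M+1) = phi ^ (M+2) := by linarith [zp_fib M]
    constructor
    · have h2 : phi ^ (M+2) ≤ phi ^ (m+2) := zp_le (by omega)
      linarith
    · intro heq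
      have h2 : phi ^ (M+2) ≤ phi ^ (m+2) := zp_le (by omega)
      have hstep : V S' ≤ phi ^ (M+1) - phi ^ (j+1) := ih1
      -- from heq: phi^M + V S' = phi^(m+2) - phi^(j+1)
      have hVS' : V S' = phi ^ (M+1) - phi ^ (j+1) ∧ phi ^ (M+2) = phi ^ (m+2) := by
        constructor <;> nlinarith [hVS, heq, hstep, h2]
      have hMm' : M = m := by have := zp_inj hVS'.2; omega
      have hS'eq : S' = Finset.Icc j (M-1) := ih2 hVS'.1
      subst hMm'
      have : S = insert M S' := by
        rw [hS']; exact (Finset.insert_erase hMS).symm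
      rw [this, hS'eq]
      ext x; simp [Finset.mem_Icc, Finset.mem_insert]; omega

lemma V_lt {S : Finset ℤ} {m : ℤ} (hmax : ∀ i ∈ S, i ≤ m) : V S < phi ^ (m+2) := by
  rcases S.eq_empty_or_nonempty with rfl | hne
  · have : V ∅ = 0 := by simp [V]
    rw [this]; exact zp_pos _
  · have hj := S.min'_mem hne
    obtain ⟨h1, _⟩ := V_bound S hne m (S.min' hne) hj (fun i hi => S.min'_le i hi) hmax
    have := zp_pos (S.min' hne + 1)
    linarith

def chain (u : ℤ) (r : ℕ) : Finset ℤ := insert (u - 2*(r:ℤ)) (topSet u r)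

lemma mem_chain {u x : ℤ} {r : ℕ} :
    x ∈ chain u r ↔ x = u - 2*(r:ℤ) ∨ ∃ s : ℕ, s < r ∧ x = u - 1 - 2*(s:ℤ) := by
  unfold chain; rw [Finset.mem_insert, mem_topSet]

lemma chain_zero (u : ℤ) : chain u 0 = {u} := by
  unfold chain; rw [topSet_zero]; norm_num

lemma chain_cons (u : ℤ) (r : ℕ) : chain u (r+1) = insert (u-1) (chain (u-2) r) := by
  unfold chain
  rw [topSet_cons]
  have e : u - 2*((r:ℤ)+1) = (u-2) - 2*(r:ℤ) := by ring
  push_cast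
  rw [e, Finset.insert_comm]

lemma chain_mem_le {u x : ℤ} {r : ℕ} (h : x ∈ chain u r) : x ≤ u := by
  rw [mem_chain] at h
  rcases h with rfl | ⟨s, _, rfl⟩ <;> omega

lemma chain_mem_ge {u x : ℤ} {r : ℕ} (h : x ∈ chain u r) : u - 2*(r:ℤ) ≤ x := by
  rw [mem_chain] at h
  rcases h with rfl | ⟨s, hs, rfl⟩ <;> omega

lemma chainLemma : ∀ (S : Finset ℤ), S.Nonempty → ∀ (u : ℤ), V S = phi ^ u →
    ∃ r : ℕ, S = chain u r := by
  intro S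
  induction S using Finset.strongInduction with
  | _ S IH =>
  intro hne u hV
  have hmax : ∀ i ∈ S, i ≤ u := by
    intro i hi
    by_contra h
    have h1 : phi ^ u < phi ^ i := zp_lt (by omega)
    have h2 := mem_le_V hi
    rw [hV] at h2; linarith
  by_cases hu : u ∈ S
  · have h1 : V (S.erase u) = 0 := by rw [V_erase hu, hV]; ring
    have h2 : S.erase u = ∅ := V_eq_zero h1
    refine ⟨0, ?_⟩
    rw [chain_zero]
    ext x
    rw [Finset.mem_singleton]
    constructor
    · intro hx
      by_contra hxu
      have : x ∈ S.erase u := Finset.mem_erase.mpr ⟨hxu, hx⟩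
      rw [h2] at this; exact absurd this (Finset.notMem_empty x)
    · rintro rfl; exact hu
  · by_cases hu1 : u - 1 ∈ S
    · set S' := S.erase (u-1) with hS'
      have hV' : V S' = phi ^ (u-2) := by
        rw [hS', V_erase hu1, hV]
        have := zp_fib (u-2)
        have e1 : u - 2 + 2 = u := by ring
        have e2 : u - 2 + 1 = u - 1 := by ring
        rw [e1, e2] at this
        linarith
      have hne' : S'.Nonempty := by
        apply Finset.nonempty_iff_ne_empty.mpr
        intro h
        rw [h] at hV'
        have : V (∅ : Finset ℤ) = 0 := by simp [V]
        have := zp_pos (u-2)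
        linarith [hV'.symm.trans_lt (by linarith : V (∅:Finset ℤ) < phi ^ (u-2))]
      obtain ⟨r, hr⟩ := IH S' (Finset.erase_ssubset hu1) hne' (u-2) hV'
      refine ⟨r + 1, ?_⟩
      rw [chain_cons, ← hr, hS', Finset.insert_erase hu1]
    · exfalso
      have hmax2 : ∀ i ∈ S, i ≤ u - 2 := by
        intro i hi
        have := hmax i hi
        rcases eq_or_lt_of_le this with rfl | h
        · exact absurd hi hu
        · rcases eq_or_lt_of_le (by omega : i ≤ u - 1) with rfl | h2
          · exact absurd hi hu1
          · omega
      have := V_lt hmax2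
      have e : u - 2 + 2 = u := by ring
      rw [e, hV] at this
      exact lt_irrefl _ this

lemma oddFlow (K : ℤ) (hK : 1 ≤ K) :
    ∀ (S : Finset ℤ), S.Nonempty → ∀ t : ℤ, 2 - K ≤ t → Even (t + K) →
    (∀ i ∈ S, i ≤ t) → (∀ i ∈ S, -K-1 ≤ i) → V S = phi ^ t - phi ^ (-K) →
    (∃ m : ℕ, t - 2*(m:ℤ) = 2 - K ∧ S = topSet t (m+1)) ∨
    (∃ m : ℕ, 2 - K ≤ t - 2*(m:ℤ) ∧ S = topSet t m ∪ Finset.Icc (-K-1) (t - 2*(m:ℤ) - 2)) := by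
  intro S
  induction S using Finset.strongInduction with
  | _ S IH =>
  intro hne t ht hev hmax hbot hV
  have hposV : 0 < phi ^ t - phi ^ (-K) := by
    have : phi ^ (-K) < phi ^ t := zp_lt (by omega)
    linarith
  by_cases hts : t ∈ S
  · exfalso
    have h1 : V (S.erase t) = - phi ^ (-K) := by rw [V_erase hts, hV]; ring
    have := V_nonneg (S.erase t)
    have := zp_pos (-K)
    linarith
  by_cases ht1 : t - 1 ∈ S
  · set S' := S.erase (t-1) with hS'
    have hV' : V S' = phi ^ (t-2) - phi ^ (-K) := by
      rw [hS', V_erase ht1, hV]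
      have := zp_fib (t-2)
      have e1 : t - 2 + 2 = t := by ring
      have e2 : t - 2 + 1 = t - 1 := by ring
      rw [e1, e2] at this
      linarith
    by_cases htK : t = 2 - K
    · -- terminal A
      have hz : V S' = 0 := by
        rw [hV', htK]
        have : (2:ℤ) - K - 2 = -K := by ring
        rw [this]; ring
      have hS'e : S' = ∅ := V_eq_zero hz
      left
      refine ⟨0, by push_cast; omega, ?_⟩
      have : S = insert (t-1) S' := by rw [hS', Finset.insert_erase ht1]
      rw [this, hS'e, topSet_cons, topSet_zero]
    · have ht4 : 4 - K ≤ t := by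
        rcases hev with ⟨c, hc⟩; omega
      have hne' : S'.Nonempty := by
        apply Finset.nonempty_iff_ne_empty.mpr
        intro h
        rw [h] at hV'
        have h0 : V (∅ : Finset ℤ) = 0 := by simp [V]
        have : phi ^ (-K) < phi ^ (t-2) := zp_lt (by omega)
        linarith [h0 ▸ hV']
      have hmax' : ∀ i ∈ S', i ≤ t - 2 := by
        intro i hi
        obtain ⟨hne1, hmem⟩ := Finset.mem_erase.mp hi
        have h1 := hmax i hmem
        rcases eq_or_lt_of_le h1 with rfl | h
        · exact absurd hmem hts
        · omega
      have hbot' : ∀ i ∈ S', -K-1 ≤ i := fun i hi => hbot i (Finset.mem_erase.mp hi).2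
      have hev' : Even (t - 2 + K) := by
        rcases hev with ⟨c, hc⟩; exact ⟨c - 1, by omega⟩
      rcases IH S' (Finset.erase_ssubset ht1) hne' (t-2) (by omega) hev' hmax' hbot' hV' with
        ⟨m, hm1, hm2⟩ | ⟨m, hm1, hm2⟩
      · left
        refine ⟨m + 1, by push_cast; omega, ?_⟩
        have hrec : S = insert (t-1) S' := by rw [hS', Finset.insert_erase ht1]
        rw [hrec, hm2, ← topSet_cons]
      · right
        refine ⟨m + 1, by push_cast; omega, ?_⟩
        have hrec : S = insert (t-1) S' := by rw [hS', Finset.insert_erase ht1]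
        rw [hrec, hm2, topSet_cons, Finset.insert_union]
        have e : t - 2 - 2*(m:ℤ) - 2 = t - 2*((m:ℤ)+1) - 2 := by ring
        rw [e]
        push_cast
        ring_nf
  · -- neither t nor t-1 in S
    right
    have hmax2 : ∀ i ∈ S, i ≤ t - 2 := by
      intro i hi
      have h1 := hmax i hi
      rcases eq_or_lt_of_le h1 with rfl | h
      · exact absurd hi hts
      · rcases eq_or_lt_of_le (by omega : i ≤ t - 1) with rfl | h2
        · exact absurd hi ht1
        · omega
    set j := S.min' hne with hj
    have hjS : j ∈ S := S.min'_mem hne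
    have hjmin : ∀ i ∈ S, j ≤ i := fun i hi => S.min'_le i hi
    obtain ⟨hle, heq⟩ := V_bound S hne (t-2) j hjS hjmin hmax2
    have e : t - 2 + 2 = t := by ring
    rw [e] at hle heq
    have hj1 : j + 1 ≤ -K := by
      by_contra h
      have : phi ^ (-K) < phi ^ (j+1) := zp_lt (by omega)
      rw [hV] at hle
      linarith
    have hj2 : j = -K - 1 := by
      have := hbot j hjS
      omega
    have hSeq : S = Finset.Icc (-K-1) (t-2) := by
      rw [← hj2]
      apply heq
      rw [hV, hj2]
      have : -K - 1 + 1 = -K := by ring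
      rw [this]
    refine ⟨0, by push_cast; omega, ?_⟩
    rw [topSet_zero, Finset.empty_union, hSeq]
    push_cast
    ring_nf

lemma evenFlow (K : ℤ) (hK : 1 ≤ K) :
    ∀ (S : Finset ℤ), S.Nonempty → ∀ t : ℤ, 2 - K ≤ t → Even (t + K) →
    (∀ i ∈ S, i ≤ t) → V S = phi ^ t + phi ^ (-K) →
    (∃ m r : ℕ, 2 - K ≤ t - 2*(m:ℤ) ∧ S = topSet t m ∪ insert (t - 2*(m:ℤ)) (chain (-K) r)) ∨
    (∃ m r : ℕ, 1 ≤ r ∧ t - 2*(m:ℤ) = 2 - K ∧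
      S = topSet t (m+1) ∪ insert (-K) (chain (-K) r)) := by
  intro S
  induction S using Finset.strongInduction with
  | _ S IH =>
  intro hne t ht hev hmax hV
  by_cases hts : t ∈ S
  · -- top digit t, rest is a representation of phi^(-K)
    set S' := S.erase t with hS'
    have hV' : V S' = phi ^ (-K) := by rw [hS', V_erase hts, hV]; ring
    have hne' : S'.Nonempty := by
      apply Finset.nonempty_iff_ne_empty.mpr
      intro h
      rw [h] at hV'
      have h0 : V (∅ : Finset ℤ) = 0 := by simp [V]
      have := zp_pos (-K)
      linarith [h0 ▸ hV']
    obtain ⟨r, hr⟩ := chainLemma S' hne' (-K) hV'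
    left
    refine ⟨0, r, by omega, ?_⟩
    rw [topSet_zero, Finset.empty_union]
    have : S = insert t S' := by rw [hS', Finset.insert_erase hts]
    rw [this, hr]
    norm_num
  by_cases ht1 : t - 1 ∈ S
  · set S' := S.erase (t-1) with hS'
    have hV' : V S' = phi ^ (t-2) + phi ^ (-K) := by
      rw [hS', V_erase ht1, hV]
      have := zp_fib (t-2)
      have e1 : t - 2 + 2 = t := by ring
      have e2 : t - 2 + 1 = t - 1 := by ring
      rw [e1, e2] at this
      linarith
    have hmax' : ∀ i ∈ S', i ≤ t - 2 := by
      intro i hi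
      obtain ⟨hne1, hmem⟩ := Finset.mem_erase.mp hi
      have h1 := hmax i hmem
      rcases eq_or_lt_of_le h1 with rfl | h
      · exact absurd hmem hts
      · omega
    by_cases htK : t = 2 - K
    · -- special branch: remainder 2·phi^(-K)
      have hV2 : V S' = 2 * phi ^ (-K) := by
        rw [hV', htK]
        have : (2:ℤ) - K - 2 = -K := by ring
        rw [this]; ring
      have hKS' : -K ∈ S' := by
        by_contra h
        have hmax2 : ∀ i ∈ S', i ≤ -K - 1 := by
          intro i hi
          have := hmax' i hi
          rcases eq_or_lt_of_le (by omega : i ≤ -K) with rfl | hh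
          · exact absurd hi h
          · omega
        have := V_lt hmax2
        have e : -K - 1 + 2 = -K + 1 := by ring
        rw [e] at this
        have e2 : phi ^ (-K + 1) = phi ^ (-K) * phi := by rw [zp_add]; norm_num
        have := zp_pos (-K)
        nlinarith [phi_lt_two, hV2]
      set S'' := S'.erase (-K) with hS''
      have hV'' : V S'' = phi ^ (-K) := by rw [hS'', V_erase hKS', hV2]; ring
      have hne'' : S''.Nonempty := by
        apply Finset.nonempty_iff_ne_empty.mpr
        intro h
        rw [h] at hV''
        have h0 : V (∅ : Finset ℤ) = 0 := by simp [V]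
        have := zp_pos (-K)
        linarith [h0 ▸ hV'']
      obtain ⟨r, hr⟩ := chainLemma S'' hne'' (-K) hV''
      have hr1 : 1 ≤ r := by
        by_contra h
        have : r = 0 := by omega
        subst this
        rw [chain_zero] at hr
        have : -K ∈ S'' := by rw [hr]; exact Finset.mem_singleton_self _
        exact absurd (Finset.mem_erase.mp this).1 (by simp)
      right
      refine ⟨0, r, hr1, by omega, ?_⟩
      have h1 : S = insert (t-1) S' := by rw [hS', Finset.insert_erase ht1]
      have h2 : S' = insert (-K) S'' := by rw [hS'', Finset.insert_erase hKS']
      rw [h1, h2, hr, topSet_cons, topSet_zero]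
      ext x
      simp only [Finset.mem_insert, Finset.mem_union, Finset.union_comm, Finset.mem_singleton,
        Finset.insert_union, Finset.empty_union, Finset.union_empty]
      tauto
    · have ht4 : 4 - K ≤ t := by rcases hev with ⟨c, hc⟩; omega
      have hne' : S'.Nonempty := by
        apply Finset.nonempty_iff_ne_empty.mpr
        intro h
        rw [h] at hV'
        have h0 : V (∅ : Finset ℤ) = 0 := by simp [V]
        have := zp_pos (-K)
        have := zp_pos (t-2)
        linarith [h0 ▸ hV']
      have hev' : Even (t - 2 + K) := by rcases hev with ⟨c, hc⟩; exact ⟨c - 1, by omega⟩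
      rcases IH S' (Finset.erase_ssubset ht1) hne' (t-2) (by omega) hev' hmax' hV' with
        ⟨m, r, hm1, hm2⟩ | ⟨m, r, hr1, hm1, hm2⟩
      · left
        refine ⟨m + 1, r, by push_cast; omega, ?_⟩
        have hrec : S = insert (t-1) S' := by rw [hS', Finset.insert_erase ht1]
        rw [hrec, hm2, topSet_cons, Finset.insert_union]
        have e : t - 2 - 2*(m:ℤ) = t - 2*((m:ℤ)+1) := by ring
        rw [e]
        push_cast
        ring_nf
      · right
        refine ⟨m + 1, r, hr1, by push_cast; omega, ?_⟩
        have hrec : S = insert (t-1) S' := by rw [hS', Finset.insert_erase ht1]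
        rw [hrec, hm2, topSet_cons (t-2) m, Finset.insert_union]
        conv_rhs => rw [topSet_cons t (m+1), Finset.insert_union, topSet_cons (t-2) m,
          Finset.insert_union]
  · exfalso
    have hmax2 : ∀ i ∈ S, i ≤ t - 2 := by
      intro i hi
      have h1 := hmax i hi
      rcases eq_or_lt_of_le h1 with rfl | h
      · exact absurd hi hts
      · rcases eq_or_lt_of_le (by omega : i ≤ t - 1) with rfl | h2
        · exact absurd hi ht1
        · omega
    have := V_lt hmax2
    have e : t - 2 + 2 = t := by ring
    rw [e, hV] at this
    have := zp_pos (-K)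
    linarith

-- conjugation transfer
lemma exists_pq : ∀ i : ℤ, ∃ p q : ℤ, phi ^ i = (p:ℝ) * phi + q ∧ psi ^ i = (p:ℝ) * psi + q := by
  have hphi_inv : phi⁻¹ = phi - 1 := by
    apply inv_eq_of_mul_eq_one_right
    linear_combination phi_sq
  have hpsi_inv : psi⁻¹ = psi - 1 := by
    apply inv_eq_of_mul_eq_one_right
    linear_combination psi_sq
  intro i
  induction i using Int.induction_on with
  | zero => exact ⟨0, 1, by norm_num, by norm_num⟩
  | succ n ih =>
    obtain ⟨p, q, h1, h2⟩ := ih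
    refine ⟨p + q, p, ?_, ?_⟩
    · have : phi ^ ((n:ℤ) + 1) = phi ^ (n:ℤ) * phi := by
        rw [zpow_add₀ phi_ne]; norm_num
      rw [this, h1]
      push_cast
      linear_combination (p:ℝ) * phi_sq
    · have : psi ^ ((n:ℤ) + 1) = psi ^ (n:ℤ) * psi := by
        rw [zpow_add₀ psi_ne]; norm_num
      rw [this, h2]
      push_cast
      linear_combination (p:ℝ) * psi_sq
  | pred n ih =>
    obtain ⟨p, q, h1, h2⟩ := ih
    refine ⟨q, p - q, ?_, ?_⟩
    · have : phi ^ (-(n:ℤ) - 1) = phi ^ (-(n:ℤ)) * phi⁻¹ := by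
        rw [← zpow_sub_one₀ phi_ne]
      rw [this, h1, hphi_inv]
      push_cast
      linear_combination (p:ℝ) * phi_sq
    · have : psi ^ (-(n:ℤ) - 1) = psi ^ (-(n:ℤ)) * psi⁻¹ := by
        rw [← zpow_sub_one₀ psi_ne]
      rw [this, h2, hpsi_inv]
      push_cast
      linear_combination (p:ℝ) * psi_sq

lemma sum_transfer (S : Finset ℤ) (n : ℤ) (h : (∑ i ∈ S, phi ^ i) = n) :
    (∑ i ∈ S, psi ^ i) = n := by
  choose P Q hP hQ using exists_pq
  have h1 : (∑ i ∈ S, phi ^ i) = (∑ i ∈ S, (P i : ℝ)) * phi + ∑ i ∈ S, (Q i : ℝ) := by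
    rw [Finset.sum_mul, ← Finset.sum_add_distrib]
    exact Finset.sum_congr rfl fun i _ => hP i
  have h2 : (∑ i ∈ S, psi ^ i) = (∑ i ∈ S, (P i : ℝ)) * psi + ∑ i ∈ S, (Q i : ℝ) := by
    rw [Finset.sum_mul, ← Finset.sum_add_distrib]
    exact Finset.sum_congr rfl fun i _ => hQ i
  set A : ℤ := ∑ i ∈ S, P i with hA
  set B : ℤ := ∑ i ∈ S, Q i with hB
  have hAc : (∑ i ∈ S, (P i : ℝ)) = (A : ℝ) := by rw [hA]; push_cast; ring
  have hBc : (∑ i ∈ S, (Q i : ℝ)) = (B : ℝ) := by rw [hB]; push_cast; ring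
  rw [hAc, hBc] at h1 h2
  have hA0 : A = 0 := by
    by_contra hA0
    apply irrational_phi
    refine ⟨((n - B : ℤ) : ℚ) / ((A : ℤ) : ℚ), ?_⟩
    have hAne : ((A:ℤ):ℝ) ≠ 0 := by exact_mod_cast hA0
    push_cast
    rw [h1] at h
    field_simp
    linarith
  rw [hA0] at h1 h2
  rw [h1] at h
  rw [h2]
  push_cast at h ⊢
  linarith

lemma geo : ∀ (T : Finset ℤ), ∀ m : ℤ, (∀ i ∈ T, m ≤ i) → (∀ i ∈ T, Even (i - m)) →
    (∑ i ∈ T, phi ^ (-i)) ≤ phi ^ (1 - m) := by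
  intro T
  induction T using Finset.strongInduction with
  | _ T IH =>
  intro m hge hev
  rcases T.eq_empty_or_nonempty with rfl | hne
  · simp
    exact (zp_pos (1-m)).le
  · set i0 := T.min' hne with hi0
    have hi0T : i0 ∈ T := T.min'_mem hne
    set T' := T.erase i0 with hT'
    have hge' : ∀ i ∈ T', i0 + 2 ≤ i := by
      intro i hi
      obtain ⟨hne1, hmem⟩ := Finset.mem_erase.mp hi
      have h1 : i0 ≤ i := T.min'_le i hmem
      have h2 : Even (i - m) := hev i hmem
      have h3 : Even (i0 - m) := hev i0 hi0T
      have : Even (i - i0) := by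
        rcases h2 with ⟨a, ha⟩; rcases h3 with ⟨b, hb⟩
        exact ⟨a - b, by omega⟩
      rcases this with ⟨c, hc⟩
      omega
    have hev' : ∀ i ∈ T', Even (i - (i0 + 2)) := by
      intro i hi
      have h2 : Even (i - m) := hev i (Finset.mem_erase.mp hi).2
      have h3 : Even (i0 - m) := hev i0 hi0T
      rcases h2 with ⟨a, ha⟩; rcases h3 with ⟨b, hb⟩
      exact ⟨a - b - 1, by omega⟩
    have ihle := IH T' (Finset.erase_ssubset hi0T) (i0 + 2) hge' hev'
    have hsplit : (∑ i ∈ T, phi ^ (-i)) = phi ^ (-i0) + ∑ i ∈ T', phi ^ (-i) := by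
      rw [hT']
      exact (Finset.add_sum_erase T (fun i => phi ^ (-i)) hi0T).symm
    have e1 : 1 - (i0 + 2) = -i0 - 1 := by ring
    rw [e1] at ihle
    have hfib := zp_fib (-i0 - 1)
    have e2 : -i0 - 1 + 2 = 1 - i0 := by ring
    have e3 : -i0 - 1 + 1 = -i0 := by ring
    rw [e2, e3] at hfib
    have hm : m ≤ i0 := hge i0 hi0T
    have : phi ^ (1 - i0) ≤ phi ^ (1 - m) := zp_le (by omega)
    linarith

lemma psi_zp (i : ℤ) : psi ^ i = (-1) ^ i * phi ^ (-i) := by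
  rw [psi_eq]
  rw [show -phi⁻¹ = (-1) * phi⁻¹ by ring]
  rw [mul_zpow, inv_zpow, ← zpow_neg]

lemma neg_one_zp_even {i j : ℤ} (h : Even (i - j)) : ((-1:ℝ)) ^ i * ((-1:ℝ)) ^ j = 1 := by
  rw [← zpow_add₀ (by norm_num : (-1:ℝ) ≠ 0)]
  rcases h with ⟨c, hc⟩
  have : i + j = 2 * (c + j) := by omega
  rw [this, zpow_mul]
  norm_num

lemma neg_one_zp_odd {i j : ℤ} (h : ¬ Even (i - j)) : ((-1:ℝ)) ^ i * ((-1:ℝ)) ^ j = -1 := by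
  rw [← zpow_add₀ (by norm_num : (-1:ℝ) ≠ 0)]
  have : Odd (i + j) := by
    rcases Int.even_or_odd (i - j) with he | ho
    · exact absurd he h
    · rcases ho with ⟨c, hc⟩; exact ⟨c + j, by omega⟩
  rcases this with ⟨c, hc⟩
  rw [hc]
  rw [zpow_add₀ (by norm_num : (-1:ℝ) ≠ 0), zpow_mul]
  norm_num

-- main bottom bound
lemma psiLower (S : Finset ℤ) (j : ℤ) (hjS : j ∈ S) (hjmin : ∀ i ∈ S, j ≤ i)
    (hknott : ¬(j + 1 ∈ S ∧ j + 2 ∉ S)) :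
    (j + 1 ∈ S → phi ^ (-j-2) ≤ (-1)^j * ∑ i ∈ S, psi ^ i) ∧
    (j + 1 ∉ S → phi ^ (-j-1) ≤ (-1)^j * ∑ i ∈ S, psi ^ i) := by
  classical
  set c : ℝ := (-1)^j * ∑ i ∈ S, psi ^ i with hc
  have hsplit : c = ∑ i ∈ S, (-1)^(i+j) * phi ^ (-i) := by
    rw [hc, Finset.mul_sum]
    apply Finset.sum_congr rfl
    intro i hi
    rw [psi_zp, zpow_add₀ (by norm_num : (-1:ℝ) ≠ 0)]
    ring
  set Sev := S.filter (fun i => Even (i - j)) with hSev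
  set Sod := S.filter (fun i => ¬ Even (i - j)) with hSod
  have hunion : c = (∑ i ∈ Sev, phi ^ (-i)) - (∑ i ∈ Sod, phi ^ (-i)) := by
    rw [hsplit, ← Finset.sum_filter_add_sum_filter_not S (fun i => Even (i - j))]
    rw [← hSev, ← hSod]
    congr 1
    · apply Finset.sum_congr rfl
      intro i hi
      have := (Finset.mem_filter.mp hi).2
      rw [show (-1:ℝ)^(i+j) = (-1:ℝ)^i * (-1:ℝ)^j by rw [zpow_add₀ (by norm_num : (-1:ℝ) ≠ 0)]]
      rw [neg_one_zp_even this]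
      ring
    · rw [← Finset.sum_neg_distrib]
      apply Finset.sum_congr rfl
      intro i hi
      have := (Finset.mem_filter.mp hi).2
      rw [show (-1:ℝ)^(i+j) = (-1:ℝ)^i * (-1:ℝ)^j by rw [zpow_add₀ (by norm_num : (-1:ℝ) ≠ 0)]]
      rw [neg_one_zp_odd this]
      ring
  have hjev : j ∈ Sev := Finset.mem_filter.mpr ⟨hjS, by simp⟩
  constructor
  · -- case j+1 ∈ S (hence j+2 ∈ S by Knott)
    intro hj1
    have hj2 : j + 2 ∈ S := by
      by_contra h
      exact hknott ⟨hj1, h⟩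
    have hj2ev : j + 2 ∈ Sev := Finset.mem_filter.mpr ⟨hj2, by exact ⟨1, by ring⟩⟩
    have hj1od : j + 1 ∈ Sod := Finset.mem_filter.mpr ⟨hj1, by
      intro h; rcases h with ⟨a, ha⟩; omega⟩
    -- lower bound for even part
    have hev_lb : phi ^ (-j) + phi ^ (-(j+2)) ≤ ∑ i ∈ Sev, phi ^ (-i) := by
      have : ({j, j+2} : Finset ℤ) ⊆ Sev := by
        intro x hx
        rcases Finset.mem_insert.mp hx with rfl | hx
        · exact hjev
        · rw [Finset.mem_singleton] at hx; subst hx; exact hj2ev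
      calc phi ^ (-j) + phi ^ (-(j+2)) = ∑ i ∈ ({j, j+2} : Finset ℤ), phi ^ (-i) := by
            rw [Finset.sum_insert (by simp only [Finset.mem_singleton]; omega), Finset.sum_singleton]
        _ ≤ ∑ i ∈ Sev, phi ^ (-i) :=
            Finset.sum_le_sum_of_subset_of_nonneg this (fun i _ _ => (zp_pos (-i)).le)
    -- upper bound for odd part
    have hod_ub : (∑ i ∈ Sod, phi ^ (-i)) ≤ phi ^ (-(j+1)) + phi ^ (-j-2) := by
      have hsub : Sod.erase (j+1) ⊆ Sod := Finset.erase_subset _ _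
      have hgeo := geo (Sod.erase (j+1)) (j + 3) ?_ ?_
      · have : (∑ i ∈ Sod, phi ^ (-i)) = phi ^ (-(j+1)) + ∑ i ∈ Sod.erase (j+1), phi ^ (-i) := by
          exact (Finset.add_sum_erase Sod (fun i => phi ^ (-i)) hj1od).symm
        rw [this]
        have e : 1 - (j + 3) = -j-2 := by ring
        rw [e] at hgeo
        linarith
      · intro i hi
        obtain ⟨hne1, hmem⟩ := Finset.mem_erase.mp hi
        obtain ⟨hmem2, hodd⟩ := Finset.mem_filter.mp hmem
        have h1 : j ≤ i := hjmin i hmem2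
        have : ¬ Even (i - j) := hodd
        rcases Int.even_or_odd (i - j) with he | ho
        · exact absurd he this
        · rcases ho with ⟨a, ha⟩; omega
      · intro i hi
        obtain ⟨hne1, hmem⟩ := Finset.mem_erase.mp hi
        obtain ⟨hmem2, hodd⟩ := Finset.mem_filter.mp hmem
        rcases Int.even_or_odd (i - j) with he | ho
        · exact absurd he hodd
        · rcases ho with ⟨a, ha⟩; exact ⟨a - 1, by omega⟩
    have hfib := zp_fib (-j-2)
    have e2 : -j - 2 + 2 = -j := by ring
    have e3 : -j - 2 + 1 = -j - 1 := by ring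
    rw [e2, e3] at hfib
    have e4 : -(j+1) = -j-1 := by ring
    have e5 : -(j+2) = -j-2 := by ring
    rw [e5] at hev_lb
    rw [e4] at hod_ub
    rw [hunion]
    linarith
  · -- case j+1 ∉ S
    intro hj1
    have hev_lb : phi ^ (-j) ≤ ∑ i ∈ Sev, phi ^ (-i) :=
      Finset.single_le_sum (fun i _ => (zp_pos (-i)).le) hjev
    have hod_ub : (∑ i ∈ Sod, phi ^ (-i)) ≤ phi ^ (-j-2) := by
      have hgeo := geo Sod (j + 3) ?_ ?_
      · have e : 1 - (j + 3) = -j-2 := by ring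
        rw [e] at hgeo
        exact hgeo
      · intro i hi
        obtain ⟨hmem2, hodd⟩ := Finset.mem_filter.mp hi
        have h1 : j ≤ i := hjmin i hmem2
        rcases Int.even_or_odd (i - j) with he | ho
        · exact absurd he hodd
        · rcases ho with ⟨a, ha⟩
          have : i ≠ j + 1 := by
            intro h; subst h; exact hj1 hmem2
          omega
      · intro i hi
        obtain ⟨hmem2, hodd⟩ := Finset.mem_filter.mp hi
        rcases Int.even_or_odd (i - j) with he | ho
        · exact absurd he hodd
        · rcases ho with ⟨a, ha⟩; exact ⟨a - 1, by omega⟩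
    have hfib := zp_fib (-j-2)
    have e2 : -j - 2 + 2 = -j := by ring
    have e3 : -j - 2 + 1 = -j - 1 := by ring
    rw [e2, e3] at hfib
    rw [hunion]
    linarith

lemma lucas_real : ∀ k : ℕ, (lucas k : ℝ) = phi ^ k + psi ^ k := by
  have key : ∀ n : ℕ, (lucas n : ℝ) = phi ^ n + psi ^ n ∧
      (lucas (n+1) : ℝ) = phi ^ (n+1) + psi ^ (n+1) := by
    intro n
    induction n with
    | zero =>
      constructor
      · show ((2:ℕ):ℝ) = _; norm_num
      · show ((1:ℕ):ℝ) = _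
        have := Real.goldenRatio_add_goldenConj
        push_cast
        simp only [pow_one]
        rw [show phi = Real.goldenRatio from rfl, show psi = Real.goldenConj from rfl]
        linarith
    | succ n ih =>
      obtain ⟨h1, h2⟩ := ih
      refine ⟨h2, ?_⟩
      show ((lucas (n+1) + lucas n : ℕ) : ℝ) = _
      push_cast
      rw [h1, h2]
      have e1 : phi ^ (n+2) = phi ^ n * phi ^ 2 := by ring
      have e2 : psi ^ (n+2) = psi ^ n * psi ^ 2 := by ring
      rw [e1, e2, phi_sq, psi_sq]
      ring
  exact fun k => (key k).1

lemma psi_pow (k : ℕ) : psi ^ k = (-1:ℝ) ^ k * phi ^ (-(k:ℤ)) := by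
  rw [psi_eq, show -phi⁻¹ = (-1) * phi⁻¹ by ring, mul_pow, inv_pow, ← zpow_natCast phi k, ← zpow_neg]

lemma lucas_real_even {k : ℕ} (h : Even k) :
    (lucas k : ℝ) = phi ^ (k:ℤ) + phi ^ (-(k:ℤ)) := by
  rw [lucas_real, psi_pow, h.neg_one_pow, ← zpow_natCast]
  ring

lemma lucas_real_odd {k : ℕ} (h : Odd k) :
    (lucas k : ℝ) = phi ^ (k:ℤ) - phi ^ (-(k:ℤ)) := by
  rw [lucas_real, psi_pow, h.neg_one_pow, ← zpow_natCast]
  ring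

lemma lucas_lt {k : ℕ} (hk : 1 ≤ k) : (lucas k : ℝ) < phi ^ ((k:ℤ) + 1) := by
  have hfib := zp_fib ((k:ℤ) - 1)
  have e1 : (k:ℤ) - 1 + 2 = (k:ℤ) + 1 := by ring
  have e2 : (k:ℤ) - 1 + 1 = (k:ℤ) := by ring
  rw [e1, e2] at hfib
  have h1 : phi ^ (-(k:ℤ)) < phi ^ ((k:ℤ) - 1) := zp_lt (by omega)
  rcases Nat.even_or_odd k with he | ho
  · rw [lucas_real_even he]; linarith
  · rw [lucas_real_odd ho]
    have := zp_pos (-(k:ℤ))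
    have := zp_pos ((k:ℤ)-1)
    linarith

lemma lucas_pos (k : ℕ) : 0 < lucas k := by
  induction k using Nat.strong_induction_on with
  | _ k ih =>
  match k with
  | 0 => norm_num [lucas]
  | 1 => norm_num [lucas]
  | n + 2 =>
    have := ih (n+1) (by omega)
    have := ih n (by omega)
    show 0 < lucas (n+1) + lucas n
    omega

-- finset-level conditions
def KB (S : Finset ℤ) : Prop :=
  ∀ j : ℤ, (j ∈ S ∧ ∀ i ∈ S, j ≤ i) → ¬(j + 1 ∈ S ∧ j + 2 ∉ S)

noncomputable def ind (S : Finset ℤ) : ℤ →₀ ℕ := Finsupp.indicator S (fun _ _ => 1)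

lemma ind_apply_mem {S : Finset ℤ} {i : ℤ} (h : i ∈ S) : ind S i = 1 :=
  Finsupp.indicator_of_mem h _

lemma ind_apply_not_mem {S : Finset ℤ} {i : ℤ} (h : i ∉ S) : ind S i = 0 :=
  Finsupp.indicator_of_notMem h _

lemma ind_support (S : Finset ℤ) : (ind S).support = S := by
  ext i
  rw [Finsupp.mem_support_iff]
  constructor
  · intro h
    by_contra hi
    exact h (ind_apply_not_mem hi)
  · intro h
    rw [ind_apply_mem h]
    norm_num

lemma ind_injective : Function.Injective ind := by
  intro S T h
  have : (ind S).support = (ind T).support := by rw [h]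
  rwa [ind_support, ind_support] at this

lemma knottSet_eq (n : ℕ) : knottSet n = ind '' {S : Finset ℤ | V S = n ∧ KB S} := by
  ext a
  constructor
  · rintro ⟨⟨hle, hsum⟩, hkn⟩
    refine ⟨a.support, ⟨?_, ?_⟩, ?_⟩
    · unfold V
      rw [hsum]
      apply Finset.sum_congr rfl
      intro i hi
      have h1 : a i ≠ 0 := Finsupp.mem_support_iff.mp hi
      have h2 : a i = 1 := le_antisymm (hle i) (by omega)
      rw [h2]
      norm_num
    · intro j ⟨hjS, hjmin⟩ ⟨hj1, hj2⟩
      apply hkn j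
      · constructor
        · exact Finsupp.mem_support_iff.mp hjS
        · intro i hi
          exact hjmin i (Finsupp.mem_support_iff.mpr hi)
      · constructor
        · have : a (j+1) ≠ 0 := Finsupp.mem_support_iff.mp hj1
          have := hle (j+1)
          omega
        · by_contra h
          exact hj2 (Finsupp.mem_support_iff.mpr h)
    · -- a = ind a.support
      ext i
      by_cases hi : i ∈ a.support
      · rw [ind_apply_mem hi]
        have h1 : a i ≠ 0 := Finsupp.mem_support_iff.mp hi
        have := hle i
        omega
      · rw [ind_apply_not_mem hi]
        exact (Finsupp.notMem_support_iff.mp hi).symm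
  · rintro ⟨S, ⟨hV, hkb⟩, rfl⟩
    refine ⟨⟨?_, ?_⟩, ?_⟩
    · intro i
      by_cases hi : i ∈ S
      · rw [ind_apply_mem hi]
      · rw [ind_apply_not_mem hi]; norm_num
    · rw [ind_support]
      rw [← hV]
      unfold V
      apply Finset.sum_congr rfl
      intro i hi
      rw [ind_apply_mem hi]
      norm_num
    · intro j ⟨hj0, hjmin⟩ ⟨h1, h2⟩
      have hjS : j ∈ S := by
        by_contra h
        exact hj0 (ind_apply_not_mem h)
      have hj1S : j + 1 ∈ S := by
        by_contra h
        rw [ind_apply_not_mem h] at h1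
        exact absurd h1 (by norm_num)
      have hj2S : j + 2 ∉ S := by
        intro h
        rw [ind_apply_mem h] at h2
        exact absurd h2 (by norm_num)
      apply hkb j
      · refine ⟨hjS, ?_⟩
        intro i hi
        apply hjmin
        rw [ind_apply_mem hi]
        norm_num
      · exact ⟨hj1S, hj2S⟩

lemma V_Icc' (a b : ℤ) (h : a ≤ b + 1) : V (Finset.Icc a b) = phi ^ (b+2) - phi ^ (a+1) :=
  V_Icc (b-a+1).toNat a b (by omega)

-- ============ families ==============
section fam
variable (k : ℕ)

def famA : Finset ℤ := topSet (k:ℤ) k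
noncomputable def famB (m : ℕ) : Finset ℤ := topSet (k:ℤ) m ∪ Finset.Icc (-(k:ℤ)-1) ((k:ℤ) - 2*(m:ℤ) - 2)
def famR (m : ℕ) : Finset ℤ := topSet (k:ℤ) m ∪ insert ((k:ℤ) - 2*(m:ℤ)) (chain (-(k:ℤ)) 0)
def famX : Finset ℤ := topSet (k:ℤ) k ∪ insert (-(k:ℤ)) (chain (-(k:ℤ)) 1)

noncomputable def FamOdd : Finset (Finset ℤ) := insert (famA k) ((Finset.range (k-1)).image (famB k))
def FamEven : Finset (Finset ℤ) := insert (famX k) ((Finset.range k).image (famR k))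
end fam

section props
variable {k : ℕ} (hk : 1 ≤ k)

lemma mem_famA {x : ℤ} : x ∈ famA k ↔ ∃ r : ℕ, r < k ∧ x = (k:ℤ) - 1 - 2*(r:ℤ) := mem_topSet

lemma mem_famB {x : ℤ} {m : ℕ} : x ∈ famB k m ↔
    (∃ r : ℕ, r < m ∧ x = (k:ℤ) - 1 - 2*(r:ℤ)) ∨ (-(k:ℤ)-1 ≤ x ∧ x ≤ (k:ℤ) - 2*(m:ℤ) - 2) := by
  unfold famB
  rw [Finset.mem_union, mem_topSet, Finset.mem_Icc]

lemma mem_famR {x : ℤ} {m : ℕ} : x ∈ famR k m ↔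
    (∃ r : ℕ, r < m ∧ x = (k:ℤ) - 1 - 2*(r:ℤ)) ∨ x = (k:ℤ) - 2*(m:ℤ) ∨ x = -(k:ℤ) := by
  unfold famR
  rw [Finset.mem_union, mem_topSet, Finset.mem_insert, mem_chain]
  constructor
  · rintro (h | h | (h | ⟨s, hs, _⟩))
    · exact Or.inl h
    · exact Or.inr (Or.inl h)
    · rw [h]; right; right; push_cast; ring
    · omega
  · rintro (h | h | h)
    · exact Or.inl h
    · exact Or.inr (Or.inl h)
    · right; right; left; rw [h]; push_cast; ring

lemma mem_famX {x : ℤ} : x ∈ famX k ↔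
    (∃ r : ℕ, r < k ∧ x = (k:ℤ) - 1 - 2*(r:ℤ)) ∨ x = -(k:ℤ) ∨ x = -(k:ℤ)-1 ∨ x = -(k:ℤ)-2 := by
  unfold famX
  rw [Finset.mem_union, mem_topSet, Finset.mem_insert, mem_chain]
  constructor
  · rintro (h | h | (h | ⟨s, hs, hx⟩))
    · exact Or.inl h
    · exact Or.inr (Or.inl h)
    · right; right; right; rw [h]; push_cast; ring
    · right; right; left
      have : s = 0 := by omega
      subst this
      rw [hx]; push_cast; ring
  · rintro (h | h | h | h)
    · exact Or.inl h
    · exact Or.inr (Or.inl h)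
    · right; right; right; exact ⟨0, by omega, by rw [h]; push_cast; ring⟩
    · right; right; left; rw [h]; push_cast; ring

-- V values
include hk

lemma V_famA : V (famA k) = phi ^ (k:ℤ) - phi ^ (-(k:ℤ)) := by
  unfold famA
  rw [V_topSet]
  congr 2
  push_cast; ring

lemma V_famB {m : ℕ} (hm : (m:ℤ) ≤ (k:ℤ) - 2) :
    V (famB k m) = phi ^ (k:ℤ) - phi ^ (-(k:ℤ)) := by
  unfold famB
  rw [V_union, V_topSet, V_Icc' _ _ (by omega)]
  · have e1 : (k:ℤ) - 2*(m:ℤ) - 2 + 2 = (k:ℤ) - 2*(m:ℤ) := by ring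
    have e2 : -(k:ℤ) - 1 + 1 = -(k:ℤ) := by ring
    rw [e1, e2]
    ring
  · rw [Finset.disjoint_left]
    intro x hx hx2
    rw [mem_topSet] at hx
    rw [Finset.mem_Icc] at hx2
    obtain ⟨r, hr, rfl⟩ := hx
    omega

lemma V_famR {m : ℕ} (hm : (m:ℤ) ≤ (k:ℤ) - 1) :
    V (famR k m) = phi ^ (k:ℤ) + phi ^ (-(k:ℤ)) := by
  unfold famR
  have h1 : chain (-(k:ℤ)) 0 = {-(k:ℤ)} := by
    ext x; rw [mem_chain, Finset.mem_singleton]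
    constructor
    · rintro (h | ⟨s, hs, _⟩)
      · rw [h]; push_cast; ring
      · omega
    · intro h; left; rw [h]; push_cast; ring
  rw [h1, V_union, V_topSet]
  · have hpair : V (insert ((k:ℤ) - 2*(m:ℤ)) {-(k:ℤ)}) = phi ^ ((k:ℤ)-2*(m:ℤ)) + phi ^ (-(k:ℤ)) := by
      unfold V
      rw [Finset.sum_insert (by rw [Finset.mem_singleton]; omega), Finset.sum_singleton]
    rw [hpair]
    ring
  · rw [Finset.disjoint_left]
    intro x hx hx2
    rw [mem_topSet] at hx
    obtain ⟨r, hr, rfl⟩ := hx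
    rcases Finset.mem_insert.mp hx2 with h | h
    · omega
    · rw [Finset.mem_singleton] at h; omega

lemma V_famX : V (famX k) = phi ^ (k:ℤ) + phi ^ (-(k:ℤ)) := by
  unfold famX
  have h1 : chain (-(k:ℤ)) 1 = insert (-(k:ℤ)-2) {-(k:ℤ)-1} := by
    ext x; rw [mem_chain, Finset.mem_insert, Finset.mem_singleton]
    constructor
    · rintro (h | ⟨s, hs, hx⟩)
      · left; rw [h]; push_cast; ring
      · right; have : s = 0 := by omega
        subst this; rw [hx]; push_cast; ring
    · rintro (h | h)
      · left; rw [h]; push_cast; ring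
      · right; exact ⟨0, by omega, by rw [h]; push_cast; ring⟩
  rw [h1, V_union, V_topSet]
  · have htri : V (insert (-(k:ℤ)) (insert (-(k:ℤ)-2) {-(k:ℤ)-1})) =
        phi ^ (-(k:ℤ)) + (phi ^ (-(k:ℤ)-2) + phi ^ (-(k:ℤ)-1)) := by
      unfold V
      rw [Finset.sum_insert (by simp only [Finset.mem_insert, Finset.mem_singleton]; omega),
        Finset.sum_insert (by rw [Finset.mem_singleton]; omega), Finset.sum_singleton]
    rw [htri]
    have hfib := zp_fib (-(k:ℤ)-2)
    have e1 : -(k:ℤ) - 2 + 2 = -(k:ℤ) := by ring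
    have e2 : -(k:ℤ) - 2 + 1 = -(k:ℤ) - 1 := by ring
    rw [e1, e2] at hfib
    have e3 : (k:ℤ) - 2*((k:ℕ):ℤ) = -(k:ℤ) := by push_cast; ring
    rw [e3]
    linarith
  · rw [Finset.disjoint_left]
    intro x hx hx2
    rw [mem_topSet] at hx
    obtain ⟨r, hr, rfl⟩ := hx
    simp only [Finset.mem_insert, Finset.mem_singleton] at hx2
    omega

-- KB properties
lemma KB_famA : KB (famA k) := by
  intro j ⟨hjS, hjmin⟩ ⟨h1, _⟩
  rw [mem_famA] at h1
  obtain ⟨r, hr, he⟩ := h1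
  have hbound : ∀ x ∈ famA k, 1 - (k:ℤ) ≤ x := by
    intro x hx; rw [mem_famA] at hx; obtain ⟨r', hr', rfl⟩ := hx; omega
  have h2 : 1 - (k:ℤ) ∈ famA k := mem_famA.mpr ⟨k-1, by omega, by push_cast; omega⟩
  have := hjmin _ h2
  have := hbound j hjS
  omega

lemma KB_famB {m : ℕ} (hm : (m:ℤ) ≤ (k:ℤ) - 2) : KB (famB k m) := by
  intro j ⟨hjS, hjmin⟩ ⟨h1, h2⟩
  have hj : j = -(k:ℤ)-1 := by
    have hbound : ∀ x ∈ famB k m, -(k:ℤ)-1 ≤ x := by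
      intro x hx; rw [mem_famB] at hx
      rcases hx with ⟨r', hr', rfl⟩ | ⟨ha, _⟩ <;> omega
    have hmem : -(k:ℤ)-1 ∈ famB k m := mem_famB.mpr (Or.inr ⟨le_refl _, by omega⟩)
    have := hjmin _ hmem
    have := hbound j hjS
    omega
  apply h2
  rw [mem_famB]
  right
  omega

lemma KB_famR {m : ℕ} (hm : (m:ℤ) ≤ (k:ℤ) - 1) : KB (famR k m) := by
  intro j ⟨hjS, hjmin⟩ ⟨h1, _⟩
  have hj : j = -(k:ℤ) := by
    have hbound : ∀ x ∈ famR k m, -(k:ℤ) ≤ x := by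
      intro x hx; rw [mem_famR] at hx
      rcases hx with ⟨r', hr', rfl⟩ | h | h <;> omega
    have hmem : -(k:ℤ) ∈ famR k m := mem_famR.mpr (Or.inr (Or.inr rfl))
    have := hjmin _ hmem
    have := hbound j hjS
    omega
  subst hj
  rw [mem_famR] at h1
  rcases h1 with ⟨r', hr', he⟩ | h | h <;> omega

lemma KB_famX : KB (famX k) := by
  intro j ⟨hjS, hjmin⟩ ⟨h1, h2⟩
  have hj : j = -(k:ℤ)-2 := by
    have hbound : ∀ x ∈ famX k, -(k:ℤ)-2 ≤ x := by
      intro x hx; rw [mem_famX] at hx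
      rcases hx with ⟨r', hr', rfl⟩ | h | h | h <;> omega
    have hmem : -(k:ℤ)-2 ∈ famX k := mem_famX.mpr (by tauto)
    have := hjmin _ hmem
    have := hbound j hjS
    omega
  apply h2
  rw [mem_famX]
  right; left
  omega
end props

-- ==================== completeness ====================

lemma zp_lt_rev {a b : ℤ} (h : phi ^ a < phi ^ b) : a < b := by
  by_contra hc
  exact absurd h (not_lt.mpr (zp_le (by omega)))

lemma common_setup {k : ℕ} (hk : 1 ≤ k) {S : Finset ℤ} (hV : V S = (lucas k : ℝ)) :
    S.Nonempty ∧ (∀ i ∈ S, i ≤ (k:ℤ)) := by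
  have hpos : (0:ℝ) < (lucas k : ℝ) := by exact_mod_cast lucas_pos k
  have hne : S.Nonempty := by
    rcases S.eq_empty_or_nonempty with rfl | h
    · exfalso
      have : V (∅ : Finset ℤ) = 0 := by simp [V]
      rw [hV] at this
      linarith
    · exact h
  refine ⟨hne, ?_⟩
  intro i hi
  have h1 : phi ^ i ≤ V S := mem_le_V hi
  rw [hV] at h1
  have h2 := lucas_lt hk
  have := zp_lt_rev (lt_of_le_of_lt h1 h2)
  omega

-- the psi-based bottom bound, for odd k
lemma odd_bottom {k : ℕ} (hk : 1 ≤ k) (hko : Odd k) {S : Finset ℤ} (hne : S.Nonempty)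
    (hV : V S = (lucas k : ℝ)) (hkb : KB S) : ∀ i ∈ S, -(k:ℤ)-1 ≤ i := by
  set j := S.min' hne with hj
  have hjS : j ∈ S := S.min'_mem hne
  have hjmin : ∀ i ∈ S, j ≤ i := fun i hi => S.min'_le i hi
  have hknott := hkb j ⟨hjS, hjmin⟩
  have hpsi : (∑ i ∈ S, psi ^ i) = ((lucas k : ℤ) : ℝ) := by
    apply sum_transfer
    show V S = _
    rw [hV]; push_cast; ring
  have hLpos : (0:ℝ) < (lucas k : ℝ) := by exact_mod_cast lucas_pos k
  have hub : (-1:ℝ)^j * ∑ i ∈ S, psi ^ i ≤ (lucas k : ℝ) := by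
    rw [hpsi]
    push_cast
    rcases Int.even_or_odd j with he | ho
    · rw [he.neg_one_zpow]; linarith
    · rw [Odd.neg_one_zpow ho]; linarith
  have hLltK : (lucas k : ℝ) < phi ^ (k:ℤ) := by
    rw [lucas_real_odd hko]
    have := zp_pos (-(k:ℤ))
    linarith
  obtain ⟨hcase1, hcase2⟩ := psiLower S j hjS hjmin hknott
  have hjlb : -(k:ℤ) - 1 ≤ j := by
    by_cases h1 : j + 1 ∈ S
    · have := hcase1 h1
      have hlt : phi ^ (-j-2) < phi ^ (k:ℤ) := lt_of_le_of_lt (le_trans this hub) hLltK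
      have := zp_lt_rev hlt
      omega
    · have := hcase2 h1
      have hlt : phi ^ (-j-1) < phi ^ (k:ℤ) := lt_of_le_of_lt (le_trans this hub) hLltK
      have := zp_lt_rev hlt
      omega
  intro i hi
  have := hjmin i hi
  omega

lemma complete_odd {k : ℕ} (hk : 1 ≤ k) (hko : Odd k) {S : Finset ℤ}
    (hV : V S = (lucas k : ℝ)) (hkb : KB S) :
    S = famA k ∨ ∃ m : ℕ, (m:ℤ) ≤ (k:ℤ) - 2 ∧ S = famB k m := by
  obtain ⟨hne, hmax⟩ := common_setup hk hV
  have hbot := odd_bottom hk hko hne hV hkb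
  have hV' : V S = phi ^ ((k:ℤ)) - phi ^ (-(k:ℤ)) := by rw [hV, lucas_real_odd hko]
  rcases oddFlow (k:ℤ) (by omega) S hne (k:ℤ) (by omega) ⟨(k:ℤ), by ring⟩ hmax hbot hV' with
    ⟨m, hm, hS⟩ | ⟨m, hm, hS⟩
  · left
    have : m + 1 = k := by omega
    rw [hS, this]; rfl
  · -- terminal B: filter m = k-1 out by KB
    have hmk : (m:ℤ) ≤ (k:ℤ) - 1 := by omega
    by_cases hm2 : (m:ℤ) ≤ (k:ℤ) - 2
    · right; exact ⟨m, hm2, hS⟩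
    · exfalso
      have hmeq : (m:ℤ) = (k:ℤ) - 1 := by omega
      -- S = topSet K (k-1) ∪ Icc (-K-1) (-K)
      have hIcc : -(k:ℤ)-1 ∈ S := by
        rw [hS, Finset.mem_union, Finset.mem_Icc]
        right; omega
      have hminp : ∀ i ∈ S, -(k:ℤ)-1 ≤ i := hbot
      have := hkb (-(k:ℤ)-1) ⟨hIcc, hminp⟩
      apply this
      constructor
      · rw [hS, Finset.mem_union, Finset.mem_Icc]; right; omega
      · intro hcon
        rw [hS, Finset.mem_union, Finset.mem_Icc, mem_topSet] at hcon
        rcases hcon with ⟨r', hr', he⟩ | h <;> omega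

lemma complete_even {k : ℕ} (hk : 1 ≤ k) (hke : Even k) {S : Finset ℤ}
    (hV : V S = (lucas k : ℝ)) (hkb : KB S) :
    S = famX k ∨ ∃ m : ℕ, (m:ℤ) ≤ (k:ℤ) - 1 ∧ S = famR k m := by
  obtain ⟨hne, hmax⟩ := common_setup hk hV
  have hV' : V S = phi ^ ((k:ℤ)) + phi ^ (-(k:ℤ)) := by rw [hV, lucas_real_even hke]
  rcases evenFlow (k:ℤ) (by omega) S hne (k:ℤ) (by omega) ⟨(k:ℤ), by ring⟩ hmax hV' with
    ⟨m, r, hm, hS⟩ | ⟨m, r, hr1, hm, hS⟩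
  · -- main branch: show r = 0 by KB
    have hr0 : r = 0 := by
      by_contra hr
      have hr1 : 1 ≤ r := by omega
      set j := -(k:ℤ) - 2*(r:ℤ) with hjdef
      have hjS : j ∈ S := by
        rw [hS, Finset.mem_union, Finset.mem_insert, mem_chain]
        right; right; left; rfl
      have hminp : ∀ i ∈ S, j ≤ i := by
        intro i hi
        rw [hS, Finset.mem_union, Finset.mem_insert, mem_chain] at hi
        rcases hi with h | h | h | ⟨s, hs, he⟩
        · rw [mem_topSet] at h; obtain ⟨r', hr', rfl⟩ := h; omega
        · omega
        · omega
        · omega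
      have := hkb j ⟨hjS, hminp⟩
      apply this
      constructor
      · rw [hS, Finset.mem_union, Finset.mem_insert, mem_chain]
        right; right; right
        exact ⟨r - 1, by omega, by push_cast; omega⟩
      · intro hcon
        rw [hS, Finset.mem_union, Finset.mem_insert, mem_chain, mem_topSet] at hcon
        rcases hcon with ⟨r', hr', he⟩ | h | h | ⟨s, hs, he⟩ <;> omega
    subst hr0
    right
    exact ⟨m, by omega, hS⟩
  · -- special branch: show r = 1 by KB
    have hrone : r = 1 := by
      by_contra hr
      have hr2 : 2 ≤ r := by omega
      set j := -(k:ℤ) - 2*(r:ℤ) with hjdef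
      have hjS : j ∈ S := by
        rw [hS, Finset.mem_union, Finset.mem_insert, mem_chain]
        right; right; left; rfl
      have hminp : ∀ i ∈ S, j ≤ i := by
        intro i hi
        rw [hS, Finset.mem_union, Finset.mem_insert, mem_chain] at hi
        rcases hi with h | h | h | ⟨s, hs, he⟩
        · rw [mem_topSet] at h; obtain ⟨r', hr', rfl⟩ := h; omega
        · omega
        · omega
        · omega
      have := hkb j ⟨hjS, hminp⟩
      apply this
      constructor
      · rw [hS, Finset.mem_union, Finset.mem_insert, mem_chain]
        right; right; right
        exact ⟨r - 1, by omega, by push_cast; omega⟩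
      · intro hcon
        rw [hS, Finset.mem_union, Finset.mem_insert, mem_chain, mem_topSet] at hcon
        rcases hcon with ⟨r', hr', he⟩ | h | h | ⟨s, hs, he⟩ <;> omega
    subst hrone
    left
    have hmeq : m + 1 = k := by omega
    rw [hS, hmeq]; rfl

lemma card_FamOdd {k : ℕ} (hk : 1 ≤ k) : (FamOdd k).card = k := by
  unfold FamOdd
  rw [Finset.card_insert_of_notMem, Finset.card_image_of_injOn, Finset.card_range]
  · omega
  · -- injOn
    intro m hm m' hm' heq
    rw [Finset.coe_range, Set.mem_Iio] at hm hm'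
    have key : ∀ a b : ℕ, a < k - 1 → b < k - 1 → famB k a = famB k b → b ≤ a := by
      intro a b ha hb h
      have w : (k:ℤ) - 2*(a:ℤ) - 2 ∈ famB k a := mem_famB.mpr (Or.inr ⟨by omega, le_refl _⟩)
      rw [h, mem_famB] at w
      rcases w with ⟨r, hr, he⟩ | ⟨h1, h2⟩ <;> omega
    have := key m m' hm hm' heq
    have := key m' m hm' hm heq.symm
    omega
  · -- famA not in image
    rw [Finset.mem_image]
    rintro ⟨m, hm, heq⟩
    rw [Finset.mem_range] at hm
    have h1 : -(k:ℤ)-1 ∈ famB k m := mem_famB.mpr (Or.inr ⟨le_refl _, by omega⟩)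
    rw [heq, mem_famA] at h1
    obtain ⟨r, hr, he⟩ := h1
    omega

lemma card_FamEven {k : ℕ} (hk : 1 ≤ k) : (FamEven k).card = k + 1 := by
  unfold FamEven
  rw [Finset.card_insert_of_notMem, Finset.card_image_of_injOn, Finset.card_range]
  · intro m hm m' hm' heq
    rw [Finset.coe_range, Set.mem_Iio] at hm hm'
    have key : ∀ a b : ℕ, a < k → b < k → famR k a = famR k b → a = b := by
      intro a b ha hb h
      have w : (k:ℤ) - 2*(a:ℤ) ∈ famR k a := mem_famR.mpr (Or.inr (Or.inl rfl))
      rw [h, mem_famR] at w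
      rcases w with ⟨r, hr, he⟩ | h1 | h1 <;> omega
    exact key m m' hm hm' heq
  · rw [Finset.mem_image]
    rintro ⟨m, hm, heq⟩
    rw [Finset.mem_range] at hm
    have h1 : -(k:ℤ)-2 ∈ famX k := mem_famX.mpr (by tauto)
    rw [← heq, mem_famR] at h1
    rcases h1 with ⟨r, hr, he⟩ | h | h <;> omega

lemma spec_odd {k : ℕ} (hk : 1 ≤ k) (hko : Odd k) :
    {S : Finset ℤ | V S = (lucas k : ℝ) ∧ KB S} = ↑(FamOdd k) := by
  ext S
  rw [Set.mem_setOf_eq, Finset.mem_coe]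
  unfold FamOdd
  rw [Finset.mem_insert, Finset.mem_image]
  constructor
  · rintro ⟨hV, hkb⟩
    rcases complete_odd hk hko hV hkb with h | ⟨m, hm, h⟩
    · exact Or.inl h
    · right
      exact ⟨m, Finset.mem_range.mpr (by omega), h.symm⟩
  · rintro (rfl | ⟨m, hm, rfl⟩)
    · exact ⟨by rw [V_famA hk, lucas_real_odd hko], KB_famA hk⟩
    · rw [Finset.mem_range] at hm
      have hm' : (m:ℤ) ≤ (k:ℤ) - 2 := by omega
      exact ⟨by rw [V_famB hk hm', lucas_real_odd hko], KB_famB hk hm'⟩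

lemma spec_even {k : ℕ} (hk : 1 ≤ k) (hke : Even k) :
    {S : Finset ℤ | V S = (lucas k : ℝ) ∧ KB S} = ↑(FamEven k) := by
  ext S
  rw [Set.mem_setOf_eq, Finset.mem_coe]
  unfold FamEven
  rw [Finset.mem_insert, Finset.mem_image]
  constructor
  · rintro ⟨hV, hkb⟩
    rcases complete_even hk hke hV hkb with h | ⟨m, hm, h⟩
    · exact Or.inl h
    · right
      exact ⟨m, Finset.mem_range.mpr (by omega), h.symm⟩
  · rintro (rfl | ⟨m, hm, rfl⟩)
    · exact ⟨by rw [V_famX hk, lucas_real_even hke], KB_famX hk⟩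
    · rw [Finset.mem_range] at hm
      have hm' : (m:ℤ) ≤ (k:ℤ) - 1 := by omega
      exact ⟨by rw [V_famR hk hm', lucas_real_even hke], KB_famR hk hm'⟩

/-- For `k ≥ 1`, the set of Knott representations of `L_k` is finite and
`κ(L_k) = k` if `k` is odd, `κ(L_k) = k + 1` if `k` is even. -/
theorem knott_count_lucas (k : ℕ) (hk : 1 ≤ k) :
    (knottSet (lucas k)).Finite ∧
      (knottSet (lucas k)).ncard = if Odd k then k else k + 1 := by
  rcases Nat.even_or_odd k with hke | hko
  · rw [knottSet_eq, spec_even hk hke]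
    constructor
    · exact ((FamEven k).finite_toSet).image ind
    · rw [Set.ncard_image_of_injective _ ind_injective, Set.ncard_coe_finset,
        card_FamEven hk, if_neg (by rw [← Nat.not_even_iff_odd, not_not]; exact hke)]
  · rw [knottSet_eq, spec_odd hk hko]
    constructor
    · exact ((FamOdd k).finite_toSet).image ind
    · rw [Set.ncard_image_of_injective _ ind_injective, Set.ncard_coe_finset,
        card_FamOdd hk, if_pos hko]
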